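/- Over ℚ, the hypersequent rule (S') is sound: if for finite multisets of variables Γ₁, Γ₂, Δ₁, Δ₂ not containing p, and positive integers n, m, the hypersequent G | mΓ₁ ∪ nΓ₂ ⊢ mΔ₁ ∪ nΔ₂ | S is valid (where S is either Γ₁ ∪ {p,…,p (n times)} ⊢ Δ₁ or Γ₂ ⊢ Δ₂ ∪ {p,…,p (m times)}), then the hypersequent G | Γ₁, np ⊢ Δ₁ | Γ₂ ⊢ Δ₂, mp is valid. -/

import Mathlib

/-- A hypersequent is a list of components, each a pair of finite multisets of
propositional variables. Validity over ℚ: every valuation makes the left sum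
≤ the right sum in some component. -/
def HValid (G : List (Multiset ℕ × Multiset ℕ)) : Prop :=
  ∀ v : ℕ → ℚ, ∃ S ∈ G, (S.1.map v).sum ≤ (S.2.map v).sum

/-- Soundness of the rule (S') over ℚ: if
`G | mΓ₁ ∪ nΓ₂ ⊢ mΔ₁ ∪ nΔ₂ | S` is valid, where `S` is either
`Γ₁, np ⊢ Δ₁` or `Γ₂ ⊢ Δ₂, mp`, `n, m > 0`, and `p` does not occur in
`Γ₁, Γ₂, Δ₁, Δ₂`, then `G | Γ₁, np ⊢ Δ₁ | Γ₂ ⊢ Δ₂, mp` is valid. -/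
theorem stmt_9 (G : List (Multiset ℕ × Multiset ℕ))
    (Γ₁ Γ₂ Δ₁ Δ₂ : Multiset ℕ) (p : ℕ) (n m : ℕ)
    (hn : 0 < n) (hm : 0 < m)
    (hp : p ∉ Γ₁ ∧ p ∉ Γ₂ ∧ p ∉ Δ₁ ∧ p ∉ Δ₂)
    (S : Multiset ℕ × Multiset ℕ)
    (hS : S = (Γ₁ + Multiset.replicate n p, Δ₁) ∨
          S = (Γ₂, Δ₂ + Multiset.replicate m p))
    (h : HValid (G ++ [(m • Γ₁ + n • Γ₂, m • Δ₁ + n • Δ₂), S])) :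
    HValid (G ++ [(Γ₁ + Multiset.replicate n p, Δ₁),
                  (Γ₂, Δ₂ + Multiset.replicate m p)]) := by
  intro v
  obtain ⟨T, hTmem, hT⟩ := h v
  rw [List.mem_append] at hTmem
  rcases hTmem with hTG | hT2
  · exact ⟨T, List.mem_append_left _ hTG, hT⟩
  · simp only [List.mem_cons, List.mem_singleton] at hT2
    rcases hT2 with rfl | hT2
    · -- T is the mixed component
      simp only [Multiset.map_add, Multiset.sum_add, Multiset.map_nsmul,
        Multiset.sum_nsmul, nsmul_eq_mul] at hT
      by_cases h1 : ((Γ₁ + Multiset.replicate n p).map v).sum ≤ (Δ₁.map v).sum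
      · exact ⟨_, List.mem_append_right _ (List.mem_cons_self), h1⟩
      · refine ⟨(Γ₂, Δ₂ + Multiset.replicate m p), List.mem_append_right _ (List.mem_cons_of_mem _ (List.mem_singleton_self _)), ?_⟩
        push_neg at h1
        simp only [Multiset.map_add, Multiset.sum_add, Multiset.map_replicate,
          Multiset.sum_replicate, nsmul_eq_mul] at h1 ⊢
        have hmq : (0:ℚ) < m := by exact_mod_cast hm
        have hnq : (0:ℚ) < n := by exact_mod_cast hn
        nlinarith [mul_lt_mul_of_pos_left h1 hmq]
    · simp only [List.mem_singleton, List.not_mem_nil, or_false] at hT2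
      subst hT2
      rcases hS with rfl | rfl
      · exact ⟨_, List.mem_append_right _ (List.mem_cons_self), hT⟩
      · exact ⟨_, List.mem_append_right _ (List.mem_cons_of_mem _ (List.mem_singleton_self _)), hT⟩
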